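/- Let (X,d) be a proper geodesic metric space, Ω ⊊ X a bounded domain, and let u : Ω → ℝ be a locally Lipschitz positive function satisfying comparison with cones from below in Ω. If x₀ ∈ Ω is an incenter, i.e. d(x₀, ∂Ω) = R_∞ := max_{x ∈ cl(Ω)} d(x, ∂Ω), then |∇⁻u|(x₀) ≤ u(x₀)/R_∞. -/

import Mathlib

open Metric Filter Set Topology

/-- A geodesic space: any two points are joined by an isometric copy of an interval. -/
def IsGeodesicSpace (X : Type*) [MetricSpace X] : Prop :=
  ∀ x y : X, ∃ γ : ℝ → X, γ 0 = x ∧ γ (dist x y) = y ∧ ∀ s t : ℝ, dist (γ s) (γ t) = |s - t|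

/-- The subslope `|∇⁻ u|(x) = limsup_{y→x} max{u(x)-u(y),0}/d(x,y)`. -/
noncomputable def mSubslope {X : Type*} [MetricSpace X] (u : X → ℝ) (x : X) : ℝ :=
  Filter.limsup (fun y => max (u x - u y) 0 / dist x y) (𝓝[≠] x)

/-- The slope `|∇ u|(x) = limsup_{y→x} |u(y)-u(x)|/d(x,y)`. -/
noncomputable def mSlope {X : Type*} [MetricSpace X] (u : X → ℝ) (x : X) : ℝ :=
  Filter.limsup (fun y => |u y - u x| / dist x y) (𝓝[≠] x)

/-- Comparison with cones from below in `Ω`: for every open `O` compactly contained in `Ω`,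
apex `xhat ∈ Ω \ O`, `a ∈ ℝ`, `κ ≤ 0`, if `u ≥ a + κ d(xhat,·)` on `∂O` then the same holds on
the closure of `O`. -/
def CompCones {X : Type*} [MetricSpace X] (Ω : Set X) (u : X → ℝ) : Prop :=
  ∀ O : Set X, IsOpen O → IsCompact (closure O) → closure O ⊆ Ω →
    ∀ xhat ∈ Ω \ O, ∀ a κ : ℝ, κ ≤ 0 →
      (∀ z ∈ frontier O, a + κ * dist xhat z ≤ u z) →
      ∀ z ∈ closure O, a + κ * dist xhat z ≤ u z

/-- Locally Lipschitz on a set. -/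
def LocLipOn {X : Type*} [MetricSpace X] (s : Set X) (u : X → ℝ) : Prop :=
  ∀ x ∈ s, ∃ K : NNReal, ∃ t ∈ 𝓝[s] x, LipschitzOnWith K u t

/-- In a geodesic space, any path from a point of an open set `Ω` to a point outside `Ω`
meets the frontier; hence the infimum of the distance to the frontier is at most the distance
to any point outside. -/
lemma infDist_frontier_le_dist {X : Type*} [MetricSpace X] (hgeo : IsGeodesicSpace X)
    {Ω : Set X} (hΩo : IsOpen Ω) {x₀ y : X} (hx₀ : x₀ ∈ Ω) (hy : y ∉ Ω) :
    Metric.infDist x₀ (frontier Ω) ≤ dist x₀ y := by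
  obtain ⟨γ, h0, hd, hiso⟩ := hgeo x₀ y
  have hγc : Continuous γ := by
    have : LipschitzWith 1 γ := by
      intro s t
      rw [edist_dist, edist_dist, hiso, Real.dist_eq]
      simp
    exact this.continuous
  set d := dist x₀ y with hdd
  have hd0 : 0 ≤ d := dist_nonneg
  set A : Set ℝ := Icc 0 d ∩ γ ⁻¹' Ωᶜ with hA
  have hAne : A.Nonempty := ⟨d, ⟨hd0, le_refl _⟩, by simpa [hd] using hy⟩
  have hAcl : IsClosed A := isClosed_Icc.inter (hΩo.isClosed_compl.preimage hγc)
  have hAbd : BddBelow A := ⟨0, fun t ht => ht.1.1⟩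
  set t₀ := sInf A with ht₀
  have ht₀A : t₀ ∈ A := hAcl.csInf_mem hAne hAbd
  have ht₀pos : 0 < t₀ :=
    lt_of_le_of_ne ht₀A.1.1 (fun h => ht₀A.2 (by rw [← h, h0]; exact hx₀))
  have hmem : γ t₀ ∈ frontier Ω := by
    have hcl : γ t₀ ∈ closure Ω := by
      have h1 : γ '' Ico 0 t₀ ⊆ Ω := by
        rintro _ ⟨t, ⟨ht0, htlt⟩, rfl⟩
        by_contra hne
        have : t ∈ A := ⟨⟨ht0, htlt.le.trans ht₀A.1.2⟩, hne⟩
        exact absurd (csInf_le hAbd this) (not_le.mpr htlt)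
      have h2 : t₀ ∈ closure (Ico 0 t₀) := by
        rw [closure_Ico ht₀pos.ne]
        exact ⟨ht₀pos.le, le_refl _⟩
      have h3 : γ t₀ ∈ γ '' closure (Ico 0 t₀) := mem_image_of_mem _ h2
      have h4 := image_closure_subset_closure_image hγc (s := Ico 0 t₀) h3
      exact closure_mono h1 h4
    rw [frontier_eq_closure_inter_closure]
    exact ⟨hcl, subset_closure ht₀A.2⟩
  calc Metric.infDist x₀ (frontier Ω) ≤ dist x₀ (γ t₀) := Metric.infDist_le_dist_of_mem hmem
    _ = t₀ := by rw [← h0, hiso]; simp [abs_of_nonneg ht₀pos.le]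
    _ ≤ d := ht₀A.1.2

theorem stmt11 {X : Type*} [MetricSpace X] [ProperSpace X] (hgeo : IsGeodesicSpace X)
    (Ω : Set X) (hΩo : IsOpen Ω) (hΩc : IsConnected Ω) (hΩb : Bornology.IsBounded Ω)
    (hΩne : Ω ≠ Set.univ)
    (u : X → ℝ) (hlip : LocLipOn Ω u) (hpos : ∀ x ∈ Ω, 0 < u x)
    (hcc : CompCones Ω u)
    (R : ℝ) (hR : R = sSup ((fun x => Metric.infDist x (frontier Ω)) '' closure Ω))
    (x₀ : X) (hx₀ : x₀ ∈ Ω) (hinc : Metric.infDist x₀ (frontier Ω) = R) :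
    mSubslope u x₀ ≤ u x₀ / R := by
  -- X is preconnected
  have hpre : PreconnectedSpace X := by
    constructor
    apply isPreconnected_of_forall_pair
    intro x _ y _
    obtain ⟨γ, h0, hd, hiso⟩ := hgeo x y
    have hγc : Continuous γ := by
      have : LipschitzWith 1 γ := by
        intro s t
        rw [edist_dist, edist_dist, hiso, Real.dist_eq]; simp
      exact this.continuous
    refine ⟨γ '' Icc 0 (dist x y), subset_univ _, ⟨0, ⟨le_refl _, dist_nonneg⟩, h0⟩,
      ⟨dist x y, ⟨dist_nonneg, le_refl _⟩, hd⟩, ?_⟩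
    exact (isPreconnected_Icc).image γ hγc.continuousOn
  -- frontier Ω is nonempty
  have hfne : (frontier Ω).Nonempty := by
    by_contra h
    rw [Set.not_nonempty_iff_eq_empty] at h
    have hclopen : IsClopen Ω := ⟨by
      rw [← closure_eq_iff_isClosed, closure_eq_self_union_frontier, h, union_empty], hΩo⟩
    rcases isClopen_iff.mp hclopen with h' | h'
    · exact absurd h' (Set.nonempty_iff_ne_empty.mp ⟨x₀, hx₀⟩)
    · exact hΩne h'
  -- R > 0
  have hRpos : 0 < R := by
    rw [← hinc]
    refine (isClosed_frontier.notMem_iff_infDist_pos hfne).mp ?_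
    intro hmem
    exact hmem.2 (hΩo.interior_eq.symm ▸ hx₀)
  -- key inclusion : closedBall x₀ r ⊆ Ω for r < R
  have hball : ∀ r : ℝ, r < R → Metric.closedBall x₀ r ⊆ Ω := by
    intro r hr z hz
    by_contra hzΩ
    have := infDist_frontier_le_dist hgeo hΩo hx₀ hzΩ
    rw [hinc] at this
    rw [Metric.mem_closedBall, dist_comm] at hz
    linarith
  -- x₀ is not isolated
  have hnb : (𝓝[≠] x₀).NeBot := by
    rw [← mem_closure_iff_nhdsWithin_neBot]
    rw [Metric.mem_closure_iff]
    intro ε hε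
    obtain ⟨y, hy⟩ := (Set.ne_univ_iff_exists_notMem Ω).mp hΩne
    obtain ⟨γ, h0, hd, hiso⟩ := hgeo x₀ y
    have hdy : R ≤ dist x₀ y := by
      rw [← hinc]; exact infDist_frontier_le_dist hgeo hΩo hx₀ hy
    set t := min (ε / 2) (dist x₀ y) with ht
    have htpos : 0 < t := lt_min (by linarith) (lt_of_lt_of_le hRpos hdy)
    refine ⟨γ t, ?_, ?_⟩
    · intro h
      have : dist x₀ (γ t) = t := by rw [← h0, hiso]; simp [abs_of_nonneg htpos.le]
      rw [mem_singleton_iff] at h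
      rw [← h] at this
      simp at this
      linarith
    · have : dist x₀ (γ t) = t := by rw [← h0, hiso]; simp [abs_of_nonneg htpos.le]
      rw [this]
      calc t ≤ ε / 2 := min_le_left _ _
        _ < ε := by linarith
  -- the nonnegativity of the quotient
  have hq : ∀ y : X, 0 ≤ max (u x₀ - u y) 0 / dist x₀ y :=
    fun y => div_nonneg (le_max_right _ _) dist_nonneg
  -- main estimate: for 0 < r < R, mSubslope u x₀ ≤ u x₀ / r
  have hmain : ∀ r : ℝ, 0 < r → r < R → mSubslope u x₀ ≤ u x₀ / r := by
    intro r hr0 hrR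
    have hux₀ : 0 < u x₀ := hpos x₀ hx₀
    set O : Set X := Metric.ball x₀ r \ {x₀} with hO
    have hOopen : IsOpen O := Metric.isOpen_ball.sdiff isClosed_singleton
    have hOcl : closure O ⊆ Metric.closedBall x₀ r :=
      (closure_mono (diff_subset.trans Metric.ball_subset_closedBall)).trans
        (by rw [closure_closedBall])
    have hOcpt : IsCompact (closure O) :=
      (isCompact_closedBall x₀ r).of_isClosed_subset isClosed_closure hOcl
    have hOΩ : closure O ⊆ Ω := hOcl.trans (hball r hrR)
    have hcone := hcc O hOopen hOcpt hOΩ x₀ ⟨hx₀, fun h => h.2 rfl⟩ (u x₀) (-(u x₀ / r))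
      (by positivity |> neg_nonpos_of_nonneg) ?_
    · -- conclude the limsup estimate
      have hev : ∀ᶠ y in 𝓝[≠] x₀, max (u x₀ - u y) 0 / dist x₀ y ≤ u x₀ / r := by
        have hball_mem : Metric.ball x₀ r ∈ 𝓝 x₀ := Metric.ball_mem_nhds x₀ hr0
        filter_upwards [nhdsWithin_le_nhds hball_mem, self_mem_nhdsWithin] with y hyb hyne
        have hyO : y ∈ O := ⟨hyb, hyne⟩
        have := hcone y (subset_closure hyO)
        have hdy : 0 < dist x₀ y := by
          rw [dist_pos]; exact fun h => hyne (by simp [h.symm])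
        rw [div_le_iff₀ hdy]
        have h1 : u x₀ - u y ≤ u x₀ / r * dist x₀ y := by linarith
        have h2 : (0:ℝ) ≤ u x₀ / r * dist x₀ y := by positivity
        exact max_le h1 h2
      exact Filter.limsup_le_of_le
        (Filter.isCoboundedUnder_le_of_le _ (x := 0) (fun y => hq y)) hev
    · -- boundary condition
      intro z hz
      have hzcl : z ∈ Metric.closedBall x₀ r := hOcl (frontier_subset_closure hz)
      have hznO : z ∉ O := by
        intro hzO
        exact (hOopen.frontier_eq ▸ hz).2 hzO
      rcases Classical.em (z = x₀) with rfl | hzne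
      · simp
      · have hznb : z ∉ Metric.ball x₀ r := fun h => hznO ⟨h, hzne⟩
        have hdist : dist x₀ z = r := by
          rw [Metric.mem_closedBall, dist_comm] at hzcl
          rw [Metric.mem_ball, dist_comm] at hznb
          linarith [not_lt.mp hznb]
        rw [hdist]
        have : u x₀ + -(u x₀ / r) * r = 0 := by field_simp; ring
        rw [this]
        exact (hpos z (hball r hrR hzcl)).le
  -- pass to the limit r → R⁻
  have htend : Tendsto (fun r : ℝ => u x₀ / r) (𝓝[<] R) (𝓝 (u x₀ / R)) :=
    (tendsto_const_nhds.div tendsto_id hRpos.ne').mono_left nhdsWithin_le_nhds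
  refine ge_of_tendsto htend ?_
  filter_upwards [Ioo_mem_nhdsLT (half_lt_self hRpos)] with r hr
  exact hmain r (lt_trans (half_pos hRpos) hr.1) hr.2
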